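/- Let p be a prime, q a power of p, and n ≥ 2. Let G ∈ 𝔽_q[X_0, ..., X_{n-1}] be a homogeneous polynomial of degree d with d ≡ 1 (mod p), viewed inside 𝔽_q[X_0, ..., X_n], and set F = G - X_n^d. Suppose there is a positive integer k with k·d = d - 1 + q and G^k = Σ_{i=0}^{n-1} (∂G/∂X_i)·X_i^q. Then F divides Σ_{i=0}^{n} (∂F/∂X_i)·X_i^q in 𝔽_q[X_0, ..., X_n]. -/
import Mathlib


open MvPolynomial

theorem stmt_5 (p : ℕ) (hp : p.Prime) (q : ℕ) (hq : ∃ k, q = p ^ k)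
    (K : Type*) [Field K] [Fintype K] [CharP K p] (hK : Fintype.card K = q)
    (n : ℕ) (hn : 2 ≤ n) (d : ℕ) (hd : d ≡ 1 [MOD p])
    (G₀ : MvPolynomial (Fin n) K) (hhom : G₀.IsHomogeneous d)
    (G : MvPolynomial (Fin (n + 1)) K) (hG : G = rename Fin.castSucc G₀)
    (F : MvPolynomial (Fin (n + 1)) K) (hF : F = G - X (Fin.last n) ^ d)
    (k : ℕ) (hk : 0 < k) (hkd : k * d = d - 1 + q)
    (hGk : G ^ k = ∑ i : Fin n, (pderiv i.castSucc G) * X i.castSucc ^ q) :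
    F ∣ ∑ i : Fin (n + 1), (pderiv i F) * X i ^ q := by
  classical
  have hdK : ((d : K)) = 1 := by
    have := (CharP.natCast_eq_natCast K p (a := d) (b := 1)).mpr hd
    simpa using this
  have hlastG : pderiv (Fin.last n) G = 0 := by
    apply pderiv_eq_zero_of_notMem_vars
    intro h
    rw [hG] at h
    obtain ⟨i, _, hi⟩ := mem_vars_rename _ _ h
    exact absurd hi (Fin.castSucc_lt_last i).ne
  have key : ∑ i : Fin (n + 1), (pderiv i F) * X i ^ q
      = G ^ k - (X (Fin.last n) ^ d) ^ k := by
    rw [Fin.sum_univ_castSucc]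
    have hFc : ∀ i : Fin n, pderiv i.castSucc F = pderiv i.castSucc G := by
      intro i
      rw [hF, map_sub, pderiv_pow, pderiv_X_of_ne (Fin.castSucc_lt_last i).ne']
      ring
    have hFl : pderiv (Fin.last n) F = - C (d : K) * X (Fin.last n) ^ (d - 1) := by
      rw [hF, map_sub, hlastG, pderiv_pow, pderiv_X_self, zero_sub]
      simp only [mul_one, C_eq_coe_nat]
      ring
    rw [hFl]
    simp_rw [hFc]
    rw [← hGk, hdK, ← pow_mul, mul_comm d k, hkd]
    simp only [map_one, neg_mul, one_mul]
    rw [← pow_add]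
    ring
  rw [key, hF]
  exact sub_dvd_pow_sub_pow _ _ _
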